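/- Let μ = Σ_{j=1}^n a_j δ_{y_j} with distinct y_j ∈ ℝ and a_j ∈ ℂ, and μ̂ = Σ_{l=1}^k â_l δ_{ŷ_l} with distinct ŷ_l ∈ ℝ and â_l ∈ ℂ, and suppose F[μ̂](ω) = F[μ](ω) + w(ω) for all ω ∈ [0, Ω], where |w(ω)| < σ for all ω ∈ [0, Ω]. Fix j ∈ {1,…,n}, let ŷ_{j'} be a point among the ŷ_l that is closest to y_j, and let S be the finite set consisting of the points y_p for p ≠ j together with those ŷ_l, l ≠ j', that are not equal to any y_p; write s = #S. Then: (i) for any ω* with 0 < ω* ≤ Ω/s such that e^{i y_j ω*} and e^{i q ω*} (q ∈ S) are pairwise distinct, |â_{j'} · Π_{q∈S} (e^{i ŷ_{j'} ω*} − e^{i q ω*})/(e^{i y_j ω*} − e^{i q ω*}) − a_j| < 2^s σ / Π_{q∈S} |e^{i y_j ω*} − e^{i q ω*}|; and (ii) for any ω* with 0 < ω* ≤ Ω/(s+1) such that e^{i y_j ω*} and e^{i q ω*} (q ∈ S) are pairwise distinct, |(e^{i ŷ_{j'} ω*} − e^{i y_j ω*}) · a_j| < 2^{s+1} σ / Π_{q∈S}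 |e^{i y_j ω*} − e^{i q ω*}|. -/

import Mathlib

open Polynomial Finset
set_option maxHeartbeats 1000000

lemma lan_coeff_bound (M : Multiset ℂ) (hM : ∀ z ∈ M, ‖z‖ ≤ 1) :
    ∑ m ∈ Finset.range (Multiset.card M + 1),
      ‖((M.map fun z => X - C z).prod).coeff m‖ ≤ 2 ^ Multiset.card M := by
  induction M using Multiset.induction with
  | empty => simp
  | cons z M ih =>
    have hz : ‖z‖ ≤ 1 := hM z (Multiset.mem_cons_self _ _)
    have hM' : ∀ x ∈ M, ‖x‖ ≤ 1 := fun x hx => hM x (Multiset.mem_cons_of_mem hx)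
    have ih' := ih hM'
    set P := (M.map fun z => X - C z).prod with hPdef
    have hdeg : P.natDegree = Multiset.card M :=
      natDegree_multiset_prod_X_sub_C_eq_card M
    have hco : P.coeff (Multiset.card M + 1) = 0 :=
      coeff_eq_zero_of_natDegree_lt (by omega)
    rw [Multiset.map_cons, Multiset.prod_cons, Multiset.card_cons]
    have expand : ∀ m, ((X - C z) * P).coeff m = (X * P).coeff m - z * P.coeff m := by
      intro m
      rw [sub_mul, Polynomial.coeff_sub, Polynomial.coeff_C_mul]
    have step1 : ∑ m ∈ Finset.range (Multiset.card M + 1 + 1),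
        ‖((X - C z) * P).coeff m‖
        ≤ ∑ m ∈ Finset.range (Multiset.card M + 1 + 1)
            , (‖(X * P).coeff m‖ + ‖z * P.coeff m‖) := by
      refine Finset.sum_le_sum fun m _ => ?_
      rw [expand m]
      exact (norm_sub_le _ _)
    rw [Finset.sum_add_distrib] at step1
    have part1 : ∑ m ∈ Finset.range (Multiset.card M + 1 + 1),
        ‖(X * P).coeff m‖ = ∑ m ∈ Finset.range (Multiset.card M + 1),
        ‖P.coeff m‖ := by
      rw [Finset.sum_range_succ']
      simp [Polynomial.coeff_X_mul]
    have part2 : ∑ m ∈ Finset.range (Multiset.card M + 1 + 1),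
        ‖z * P.coeff m‖ ≤ ∑ m ∈ Finset.range (Multiset.card M + 1),
        ‖P.coeff m‖ := by
      rw [Finset.sum_range_succ, hco, mul_zero, norm_zero, add_zero]
      refine Finset.sum_le_sum fun m _ => ?_
      rw [norm_mul]
      calc ‖z‖ * ‖P.coeff m‖
          ≤ 1 * ‖P.coeff m‖ :=
            mul_le_mul_of_nonneg_right hz (by positivity)
        _ = _ := one_mul _
    have final := step1.trans (add_le_add part1.le part2)
    refine final.trans ?_
    have h2 : (2:ℝ) ^ (Multiset.card M + 1) = 2 ^ Multiset.card M + 2 ^ Multiset.card M := by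
      ring
    rw [h2]
    exact add_le_add ih' ih'

lemma lan_eval_identity
    {n k : ℕ} (Ω : ℝ)
    (y : Fin n → ℝ) (a : Fin n → ℂ) (yh : Fin k → ℝ) (ah : Fin k → ℂ)
    (w : ℝ → ℂ)
    (hdata : ∀ ω ∈ Set.Icc (0 : ℝ) Ω,
      ∑ l, ah l * Complex.exp (Complex.I * (yh l : ℂ) * (ω : ℂ))
        = ∑ p, a p * Complex.exp (Complex.I * (y p : ℂ) * (ω : ℂ)) + w ω)
    (ωs : ℝ) (hω : 0 < ωs) (D : ℕ) (hD : (D : ℝ) * ωs ≤ Ω)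
    (P : Polynomial ℂ) (hP : P.natDegree ≤ D) :
    ∑ l, ah l * P.eval (Complex.exp (Complex.I * (yh l : ℂ) * (ωs : ℂ)))
      = ∑ p, a p * P.eval (Complex.exp (Complex.I * (y p : ℂ) * (ωs : ℂ)))
        + ∑ m ∈ Finset.range (D + 1), P.coeff m * w ((m : ℝ) * ωs) := by
  have hexp : ∀ (t : ℝ) (m : ℕ),
      Complex.exp (Complex.I * (t : ℂ) * (((m : ℝ) * ωs : ℝ) : ℂ))
        = (Complex.exp (Complex.I * (t : ℂ) * (ωs : ℂ))) ^ m := by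
    intro t m
    rw [← Complex.exp_nat_mul]
    push_cast
    ring_nf
  have hmem : ∀ m ∈ Finset.range (D + 1), ((m : ℝ) * ωs) ∈ Set.Icc (0 : ℝ) Ω := by
    intro m hm
    constructor
    · positivity
    · calc (m : ℝ) * ωs ≤ (D : ℝ) * ωs := by
            apply mul_le_mul_of_nonneg_right _ hω.le
            exact_mod_cast Nat.le_of_lt_succ (Finset.mem_range.mp hm)
      _ ≤ Ω := hD
  have hd2 : ∀ m ∈ Finset.range (D + 1),
      ∑ l, ah l * (Complex.exp (Complex.I * (yh l : ℂ) * (ωs : ℂ))) ^ m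
        = ∑ p, a p * (Complex.exp (Complex.I * (y p : ℂ) * (ωs : ℂ))) ^ m + w ((m : ℝ) * ωs) := by
    intro m hm
    have := hdata _ (hmem m hm)
    simpa only [hexp] using this
  have heval : ∀ x : ℂ, P.eval x = ∑ m ∈ Finset.range (D + 1), P.coeff m * x ^ m :=
    fun x => Polynomial.eval_eq_sum_range' (Nat.lt_succ_of_le hP) x
  calc ∑ l, ah l * P.eval (Complex.exp (Complex.I * (yh l : ℂ) * (ωs : ℂ)))
      = ∑ m ∈ Finset.range (D + 1), P.coeff m *
          ∑ l, ah l * (Complex.exp (Complex.I * (yh l : ℂ) * (ωs : ℂ))) ^ m := by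
        simp_rw [heval, Finset.mul_sum]
        rw [Finset.sum_comm]
        congr 1; ext l; congr 1; ext m; ring
    _ = ∑ m ∈ Finset.range (D + 1), (P.coeff m *
          ∑ p, a p * (Complex.exp (Complex.I * (y p : ℂ) * (ωs : ℂ))) ^ m
          + P.coeff m * w ((m : ℝ) * ωs)) := by
        refine Finset.sum_congr rfl fun m hm => ?_
        rw [hd2 m hm, mul_add]
    _ = ∑ p, a p * P.eval (Complex.exp (Complex.I * (y p : ℂ) * (ωs : ℂ)))
        + ∑ m ∈ Finset.range (D + 1), P.coeff m * w ((m : ℝ) * ωs) := by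
        rw [Finset.sum_add_distrib]
        congr 1
        simp_rw [heval, Finset.mul_sum]
        rw [Finset.sum_comm]
        congr 1; ext m; congr 1; ext p; ring

/-- **Corollary of the location-amplitude identities (noise bounds).**
With the setting of the location-amplitude identities and `|w(ω)| < σ` on `[0, Ω]`:
(i) for `0 < ω* ≤ Ω/s` with `e^{i y_j ω*}`, `e^{i q ω*}` (`q ∈ S`) pairwise distinct,
`|â_{j'} Π_{q∈S} (e^{i ŷ_{j'} ω*} − e^{i q ω*})/(e^{i y_j ω*} − e^{i q ω*}) − a_j|
  < 2^s σ / Π_{q∈S} |e^{i y_j ω*} − e^{i q ω*}|`;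
(ii) for `0 < ω* ≤ Ω/(s+1)` with the same distinctness,
`|(e^{i ŷ_{j'} ω*} − e^{i y_j ω*}) a_j| < 2^{s+1} σ / Π_{q∈S} |e^{i y_j ω*} − e^{i q ω*}|`. -/
theorem location_amplitude_noise_bounds
    (n k : ℕ) (hn : 0 < n) (hk : 0 < k)
    (Ω σ : ℝ) (hΩ : 0 < Ω) (hσ : 0 < σ)
    (y : Fin n → ℝ) (hy : Function.Injective y) (a : Fin n → ℂ)
    (yh : Fin k → ℝ) (hyh : Function.Injective yh) (ah : Fin k → ℂ)
    (w : ℝ → ℂ)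
    (hw : ∀ ω ∈ Set.Icc (0 : ℝ) Ω, ‖w ω‖ < σ)
    (hdata : ∀ ω ∈ Set.Icc (0 : ℝ) Ω,
      ∑ l, ah l * Complex.exp (Complex.I * (yh l : ℂ) * (ω : ℂ))
        = ∑ p, a p * Complex.exp (Complex.I * (y p : ℂ) * (ω : ℂ)) + w ω)
    (j : Fin n) (j' : Fin k)
    (hj' : ∀ l, |yh j' - y j| ≤ |yh l - y j|)
    (S : Finset ℝ)
    (hS : S = Finset.image y (Finset.univ.erase j)
        ∪ Finset.image yh ((Finset.univ.erase j').filter fun l => ∀ p, yh l ≠ y p))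
    (s : ℕ) (hs : s = S.card) :
    (∀ ωs : ℝ, 0 < ωs → ωs ≤ Ω / s →
      Set.InjOn (fun t : ℝ => Complex.exp (Complex.I * (t : ℂ) * (ωs : ℂ)))
        (insert (y j) (S : Set ℝ)) →
      ‖(ah j' * ∏ q ∈ S,
              ((Complex.exp (Complex.I * (yh j' : ℂ) * (ωs : ℂ))
                  - Complex.exp (Complex.I * (q : ℂ) * (ωs : ℂ)))
                / (Complex.exp (Complex.I * (y j : ℂ) * (ωs : ℂ))
                  - Complex.exp (Complex.I * (q : ℂ) * (ωs : ℂ))))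
            - a j)‖
        < 2 ^ s * σ /
            ∏ q ∈ S,
              ‖(Complex.exp (Complex.I * (y j : ℂ) * (ωs : ℂ))
                - Complex.exp (Complex.I * (q : ℂ) * (ωs : ℂ)))‖) ∧
    (∀ ωs : ℝ, 0 < ωs → ωs ≤ Ω / (s + 1) →
      Set.InjOn (fun t : ℝ => Complex.exp (Complex.I * (t : ℂ) * (ωs : ℂ)))
        (insert (y j) (S : Set ℝ)) →
      ‖((Complex.exp (Complex.I * (yh j' : ℂ) * (ωs : ℂ))
              - Complex.exp (Complex.I * (y j : ℂ) * (ωs : ℂ))) * a j)‖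
        < 2 ^ (s + 1) * σ /
            ∏ q ∈ S,
              ‖(Complex.exp (Complex.I * (y j : ℂ) * (ωs : ℂ))
                - Complex.exp (Complex.I * (q : ℂ) * (ωs : ℂ)))‖) := by
    -- membership facts
  have hyjS : y j ∉ S := by
    rw [hS]
    intro hmem
    rcases Finset.mem_union.mp hmem with h | h
    · obtain ⟨p, hp, hpe⟩ := Finset.mem_image.mp h
      exact (Finset.mem_erase.mp hp).1 (hy hpe)
    · obtain ⟨l, hl, hle⟩ := Finset.mem_image.mp h
      exact (Finset.mem_filter.mp hl).2 j hle
  have hypS : ∀ p : Fin n, p ≠ j → y p ∈ S := by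
    intro p hp
    rw [hS]
    exact Finset.mem_union_left _
      (Finset.mem_image_of_mem y (Finset.mem_erase.mpr ⟨hp, Finset.mem_univ p⟩))
  have hyhne : ∀ l : Fin k, l ≠ j' → yh l ≠ y j := by
    intro l hl hle
    have h0 : |yh j' - y j| ≤ 0 := by
      have := hj' l
      rw [hle] at this
      simpa using this
    have h1 : yh j' = y j := by
      have := abs_nonneg (yh j' - y j)
      have h2 : |yh j' - y j| = 0 := le_antisymm h0 this
      have := abs_eq_zero.mp h2
      linarith
    exact hl (hyh (by rw [hle, h1]))
  have hylS : ∀ l : Fin k, l ≠ j' → yh l ∈ S := by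
    intro l hl
    rw [hS]
    by_cases hex : ∃ p, yh l = y p
    · obtain ⟨p, hp⟩ := hex
      have hpj : p ≠ j := by
        intro h
        exact hyhne l hl (by rw [hp, h])
      exact Finset.mem_union_left _
        (Finset.mem_image.mpr ⟨p, Finset.mem_erase.mpr ⟨hpj, Finset.mem_univ p⟩, hp.symm⟩)
    · push_neg at hex
      exact Finset.mem_union_right _
        (Finset.mem_image_of_mem yh (Finset.mem_filter.mpr
          ⟨Finset.mem_erase.mpr ⟨hl, Finset.mem_univ l⟩, hex⟩))
  constructor
  · -- Part (i)
    intro ωs hω1 hω2 hinj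
    rcases Nat.eq_zero_or_pos s with hs0 | hspos
    · exfalso
      rw [hs0] at hω2
      norm_num at hω2
      linarith
    have habs1 : ∀ t : ℝ,
        ‖Complex.exp (Complex.I * (t : ℂ) * (ωs : ℂ))‖ = 1 := by
      intro t
      rw [show Complex.I * (t : ℂ) * (ωs : ℂ) = ((t * ωs : ℝ) : ℂ) * Complex.I by
        push_cast; ring]
      exact Complex.norm_exp_ofReal_mul_I _
    have hBne : ∀ q ∈ S,
        Complex.exp (Complex.I * ((y j : ℝ) : ℂ) * (ωs : ℂ))
          ≠ Complex.exp (Complex.I * (q : ℂ) * (ωs : ℂ)) := by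
      intro q hq hcontra
      have : y j = q := hinj (Set.mem_insert _ _) (Set.mem_insert_of_mem _ hq) hcontra
      exact hyjS (this ▸ hq)
    set e : ℝ → ℂ := fun t => Complex.exp (Complex.I * (t : ℂ) * (ωs : ℂ)) with hedef
    set P : Polynomial ℂ := ∏ q ∈ S, (Polynomial.X - Polynomial.C (e q)) with hP
    have hPm : P = ((S.val.map e).map (fun z => Polynomial.X - Polynomial.C z)).prod := by
      rw [hP, Finset.prod_eq_multiset_prod, Multiset.map_map]
      rfl
    have hcard : Multiset.card (S.val.map e) = s := by
      rw [Multiset.card_map]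
      exact hs.symm
    have hdeg : P.natDegree = s := by
      rw [hPm, Polynomial.natDegree_multiset_prod_X_sub_C_eq_card, hcard]
    have hmonic : P.Monic :=
      Polynomial.monic_prod_of_monic _ _ fun q _ => Polynomial.monic_X_sub_C _
    have hcsum : ∑ m ∈ Finset.range (s + 1), ‖P.coeff m‖ ≤ 2 ^ s := by
      have h := lan_coeff_bound (S.val.map e) (by
        intro z hz
        obtain ⟨q, _, rfl⟩ := Multiset.mem_map.mp hz
        exact (habs1 q).le)
      rw [hcard] at h
      rw [hPm]
      exact h
    have hspos' : (0 : ℝ) < (s : ℝ) := by exact_mod_cast hspos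
    have hDω : (s : ℝ) * ωs ≤ Ω := by
      rw [mul_comm]
      exact (le_div_iff₀ hspos').mp hω2
    have hkey := lan_eval_identity Ω y a yh ah w hdata ωs hω1 s hDω P hdeg.le
    have hevalP : ∀ x : ℂ, P.eval x = ∏ q ∈ S, (x - e q) := by
      intro x
      rw [hP, Polynomial.eval_prod]
      simp
    have hLHS : ∑ l, ah l * P.eval (e (yh l)) = ah j' * P.eval (e (yh j')) := by
      refine Finset.sum_eq_single j' (fun l _ hl => ?_) (fun h => absurd (Finset.mem_univ _) h)
      have h0 : ∏ q ∈ S, (e (yh l) - e q) = 0 :=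
        Finset.prod_eq_zero (hylS l hl) (sub_self _)
      rw [hevalP, h0, mul_zero]
    have hRHS : ∑ p, a p * P.eval (e (y p)) = a j * P.eval (e (y j)) := by
      refine Finset.sum_eq_single j (fun p _ hp => ?_) (fun h => absurd (Finset.mem_univ _) h)
      have h0 : ∏ q ∈ S, (e (y p) - e q) = 0 :=
        Finset.prod_eq_zero (hypS p hp) (sub_self _)
      rw [hevalP, h0, mul_zero]
    rw [hLHS, hRHS, hevalP, hevalP] at hkey
    set Err : ℂ := ∑ m ∈ Finset.range (s + 1), P.coeff m * w ((m : ℝ) * ωs) with hErr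
    have hPBne : (∏ q ∈ S, (e (y j) - e q)) ≠ 0 :=
      Finset.prod_ne_zero_iff.mpr fun q hq => sub_ne_zero_of_ne (hBne q hq)
    have hquot : ah j' * (∏ q ∈ S, ((e (yh j') - e q) / (e (y j) - e q))) - a j
        = Err / ∏ q ∈ S, (e (y j) - e q) := by
      rw [Finset.prod_div_distrib]
      field_simp
      linear_combination hkey
    have hPpos : (0 : ℝ) < ∏ q ∈ S, ‖e (y j) - e q‖ :=
      Finset.prod_pos fun q hq =>
        norm_pos_iff.mpr (sub_ne_zero_of_ne (hBne q hq))
    have hmemΩ : ∀ m ∈ Finset.range (s + 1), ((m : ℝ) * ωs) ∈ Set.Icc (0 : ℝ) Ω := by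
      intro m hm
      constructor
      · positivity
      · calc (m : ℝ) * ωs ≤ (s : ℝ) * ωs := by
              apply mul_le_mul_of_nonneg_right _ hω1.le
              exact_mod_cast Nat.le_of_lt_succ (Finset.mem_range.mp hm)
          _ ≤ Ω := hDω
    have herr : ‖Err‖ < 2 ^ s * σ := by
      have htri : ‖Err‖
          ≤ ∑ m ∈ Finset.range (s + 1), ‖P.coeff m * w ((m : ℝ) * ωs)‖ := by
        rw [hErr]
        exact norm_sum_le _ _
      have hlt : ∑ m ∈ Finset.range (s + 1), ‖P.coeff m * w ((m : ℝ) * ωs)‖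
          < ∑ m ∈ Finset.range (s + 1), ‖P.coeff m‖ * σ := by
        refine Finset.sum_lt_sum (fun m hm => ?_) ⟨s, Finset.self_mem_range_succ s, ?_⟩
        · rw [norm_mul]
          exact mul_le_mul_of_nonneg_left (hw _ (hmemΩ m hm)).le (by positivity)
        · have hcs : P.coeff s = 1 := by
            have := hmonic.coeff_natDegree
            rwa [hdeg] at this
          rw [hcs]
          simpa using hw _ (hmemΩ s (Finset.self_mem_range_succ s))
      calc ‖Err‖ < ∑ m ∈ Finset.range (s + 1), ‖P.coeff m‖ * σ :=
            lt_of_le_of_lt htri hlt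
        _ = (∑ m ∈ Finset.range (s + 1), ‖P.coeff m‖) * σ := by
            rw [Finset.sum_mul]
        _ ≤ 2 ^ s * σ := mul_le_mul_of_nonneg_right hcsum hσ.le
    calc ‖ah j' * (∏ q ∈ S, ((e (yh j') - e q) / (e (y j) - e q))) - a j‖
        = ‖Err‖ / ∏ q ∈ S, ‖e (y j) - e q‖ := by
          rw [hquot, norm_div, norm_prod]
      _ < 2 ^ s * σ / ∏ q ∈ S, ‖e (y j) - e q‖ :=
          (div_lt_div_iff_of_pos_right hPpos).mpr herr
  · -- Part (ii)
    intro ωs hω1 hω2 hinj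
    have habs1 : ∀ t : ℝ,
        ‖Complex.exp (Complex.I * (t : ℂ) * (ωs : ℂ))‖ = 1 := by
      intro t
      rw [show Complex.I * (t : ℂ) * (ωs : ℂ) = ((t * ωs : ℝ) : ℂ) * Complex.I by
        push_cast; ring]
      exact Complex.norm_exp_ofReal_mul_I _
    have hBne : ∀ q ∈ S,
        Complex.exp (Complex.I * ((y j : ℝ) : ℂ) * (ωs : ℂ))
          ≠ Complex.exp (Complex.I * (q : ℂ) * (ωs : ℂ)) := by
      intro q hq hcontra
      have : y j = q := hinj (Set.mem_insert _ _) (Set.mem_insert_of_mem _ hq) hcontra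
      exact hyjS (this ▸ hq)
    set e : ℝ → ℂ := fun t => Complex.exp (Complex.I * (t : ℂ) * (ωs : ℂ)) with hedef
    set P : Polynomial ℂ :=
      (Polynomial.X - Polynomial.C (e (yh j'))) * ∏ q ∈ S, (Polynomial.X - Polynomial.C (e q))
      with hP
    have hPm : P = (((e (yh j') ::ₘ S.val.map e)).map
        (fun z => Polynomial.X - Polynomial.C z)).prod := by
      rw [hP, Multiset.map_cons, Multiset.prod_cons, Finset.prod_eq_multiset_prod,
        Multiset.map_map]
      rfl
    have hcard : Multiset.card (e (yh j') ::ₘ S.val.map e) = s + 1 := by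
      rw [Multiset.card_cons, Multiset.card_map, hs]
      rfl
    have hdeg : P.natDegree = s + 1 := by
      rw [hPm, Polynomial.natDegree_multiset_prod_X_sub_C_eq_card, hcard]
    have hmonic : P.Monic := by
      rw [hPm]
      exact Polynomial.monic_multiset_prod_of_monic _ _ fun z _ => Polynomial.monic_X_sub_C _
    have hcsum : ∑ m ∈ Finset.range (s + 1 + 1), ‖P.coeff m‖ ≤ 2 ^ (s + 1) := by
      have h := lan_coeff_bound (e (yh j') ::ₘ S.val.map e) (by
        intro z hz
        rcases Multiset.mem_cons.mp hz with h | h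
        · rw [h]; exact (habs1 _).le
        · obtain ⟨q, _, rfl⟩ := Multiset.mem_map.mp h
          exact (habs1 q).le)
      rw [hcard] at h
      rw [hPm]
      exact h
    have hspos' : (0 : ℝ) < (s : ℝ) + 1 := by positivity
    have hDω : ((s + 1 : ℕ) : ℝ) * ωs ≤ Ω := by
      push_cast
      rw [mul_comm]
      exact (le_div_iff₀ hspos').mp hω2
    have hkey := lan_eval_identity Ω y a yh ah w hdata ωs hω1 (s + 1) hDω P hdeg.le
    have hevalP : ∀ x : ℂ, P.eval x = (x - e (yh j')) * ∏ q ∈ S, (x - e q) := by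
      intro x
      rw [hP, Polynomial.eval_mul, Polynomial.eval_prod]
      simp
    have hLHS : ∑ l, ah l * P.eval (e (yh l)) = 0 := by
      refine Finset.sum_eq_zero fun l _ => ?_
      by_cases hl : l = j'
      · subst hl
        rw [hevalP, sub_self, zero_mul, mul_zero]
      · have h0 : ∏ q ∈ S, (e (yh l) - e q) = 0 :=
          Finset.prod_eq_zero (hylS l hl) (sub_self _)
        rw [hevalP, h0, mul_zero, mul_zero]
    have hRHS : ∑ p, a p * P.eval (e (y p)) = a j * P.eval (e (y j)) := by
      refine Finset.sum_eq_single j (fun p _ hp => ?_) (fun h => absurd (Finset.mem_univ _) h)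
      have h0 : ∏ q ∈ S, (e (y p) - e q) = 0 :=
        Finset.prod_eq_zero (hypS p hp) (sub_self _)
      rw [hevalP, h0, mul_zero, mul_zero]
    rw [hLHS, hRHS, hevalP] at hkey
    set Err : ℂ := ∑ m ∈ Finset.range (s + 1 + 1), P.coeff m * w ((m : ℝ) * ωs) with hErr
    have hPBne : (∏ q ∈ S, (e (y j) - e q)) ≠ 0 :=
      Finset.prod_ne_zero_iff.mpr fun q hq => sub_ne_zero_of_ne (hBne q hq)
    have hquot : (e (yh j') - e (y j)) * a j = Err / ∏ q ∈ S, (e (y j) - e q) := by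
      rw [eq_div_iff hPBne]
      linear_combination hkey
    have hPpos : (0 : ℝ) < ∏ q ∈ S, ‖e (y j) - e q‖ :=
      Finset.prod_pos fun q hq =>
        norm_pos_iff.mpr (sub_ne_zero_of_ne (hBne q hq))
    have hmemΩ : ∀ m ∈ Finset.range (s + 1 + 1), ((m : ℝ) * ωs) ∈ Set.Icc (0 : ℝ) Ω := by
      intro m hm
      constructor
      · positivity
      · calc (m : ℝ) * ωs ≤ ((s + 1 : ℕ) : ℝ) * ωs := by
              apply mul_le_mul_of_nonneg_right _ hω1.le
              exact_mod_cast Nat.le_of_lt_succ (Finset.mem_range.mp hm)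
          _ ≤ Ω := hDω
    have herr : ‖Err‖ < 2 ^ (s + 1) * σ := by
      have htri : ‖Err‖
          ≤ ∑ m ∈ Finset.range (s + 1 + 1), ‖P.coeff m * w ((m : ℝ) * ωs)‖ := by
        rw [hErr]
        exact norm_sum_le _ _
      have hlt : ∑ m ∈ Finset.range (s + 1 + 1), ‖P.coeff m * w ((m : ℝ) * ωs)‖
          < ∑ m ∈ Finset.range (s + 1 + 1), ‖P.coeff m‖ * σ := by
        refine Finset.sum_lt_sum (fun m hm => ?_)
          ⟨s + 1, Finset.self_mem_range_succ (s + 1), ?_⟩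
        · rw [norm_mul]
          exact mul_le_mul_of_nonneg_left (hw _ (hmemΩ m hm)).le (by positivity)
        · have hcs : P.coeff (s + 1) = 1 := by
            have := hmonic.coeff_natDegree
            rwa [hdeg] at this
          rw [hcs]
          simpa using hw _ (hmemΩ (s + 1) (Finset.self_mem_range_succ (s + 1)))
      calc ‖Err‖
          < ∑ m ∈ Finset.range (s + 1 + 1), ‖P.coeff m‖ * σ :=
            lt_of_le_of_lt htri hlt
        _ = (∑ m ∈ Finset.range (s + 1 + 1), ‖P.coeff m‖) * σ := by
            rw [Finset.sum_mul]
        _ ≤ 2 ^ (s + 1) * σ := mul_le_mul_of_nonneg_right hcsum hσ.le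
    calc ‖(e (yh j') - e (y j)) * a j‖
        = ‖Err‖ / ∏ q ∈ S, ‖e (y j) - e q‖ := by
          rw [hquot, norm_div, norm_prod]
      _ < 2 ^ (s + 1) * σ / ∏ q ∈ S, ‖e (y j) - e q‖ :=
          (div_lt_div_iff_of_pos_right hPpos).mpr herr
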